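/- Let f ∈ H⁴(Ω) ∩ H¹₀(Ω) on a bounded domain Ω with Δf = 0 on ∂Ω, and suppose a > 0 satisfies a·‖g‖² ≤ ‖∇g‖² for all g ∈ H¹₀(Ω). Then ‖∂_{x₁}Δf‖² ≤ ‖∇Δf‖² ≤ ‖Δ²f‖·‖Δf‖, and hence a·‖∂_{x₁}Δf‖² ≤ ‖Δ²f‖². -/

import Mathlib

open MeasureTheory Real Set

/-- Pointwise Laplacian of `f : (Fin n → ℝ) → ℝ`. -/
noncomputable def laplacian {n : ℕ} (f : (Fin n → ℝ) → ℝ) (x : Fin n → ℝ) : ℝ :=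
  ∑ i, fderiv ℝ (fun y => fderiv ℝ f y (Pi.single i 1)) x (Pi.single i 1)

open Filter Topology Metric Convolution

/-- A global bound for the derivative of `Real.smoothTransition`. -/
lemma smoothTransition_deriv_bound :
    ∃ C : ℝ, 0 < C ∧ ∀ t : ℝ, |deriv Real.smoothTransition t| ≤ C := by
  have hcont : Continuous (deriv Real.smoothTransition) :=
    (Real.smoothTransition.contDiff (n := 2)).continuous_deriv one_le_two
  obtain ⟨C₀, hC₀⟩ := (isCompact_Icc (a := (0:ℝ)) (b := 1)).exists_bound_of_continuousOn
    hcont.continuousOn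
  refine ⟨max C₀ 1, lt_max_of_lt_right one_pos, fun t => ?_⟩
  rcases le_or_gt t 0 with ht | ht
  · rcases eq_or_lt_of_le ht with rfl | ht
    · exact le_trans (hC₀ 0 (by simp)) (le_max_left _ _)
    · have : deriv Real.smoothTransition t = 0 := by
        have : Real.smoothTransition =ᶠ[𝓝 t] fun _ => (0:ℝ) := by
          filter_upwards [Iio_mem_nhds ht] with s hs
          exact Real.smoothTransition.zero_of_nonpos hs.le
        rw [this.deriv_eq, deriv_const]
      simp [this, le_max_iff]
  · rcases le_or_gt t 1 with ht1 | ht1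
    · exact le_trans (hC₀ t ⟨ht.le, ht1⟩) (le_max_left _ _)
    · have : deriv Real.smoothTransition t = 0 := by
        have : Real.smoothTransition =ᶠ[𝓝 t] fun _ => (1:ℝ) := by
          filter_upwards [Ioi_mem_nhds ht1] with s hs
          exact Real.smoothTransition.one_of_one_le hs.le
        rw [this.deriv_eq, deriv_const]
      simp [this, le_max_iff]

section cutoff

variable {n : ℕ}

/-- Smooth cutoff functions adapted to an arbitrary set, with uniform gradient control. -/
theorem exists_cutoff (Ω : Set (Fin n → ℝ)) :
    ∃ C : ℝ, 0 < C ∧ ∀ ε : ℝ, 0 < ε → ∃ θ : (Fin n → ℝ) → ℝ,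
      ContDiff ℝ 1 θ ∧ (∀ x, 0 ≤ θ x ∧ θ x ≤ 1) ∧
      (∀ x, Metric.infDist x Ωᶜ ≤ ε / 2 → θ x = 0) ∧
      (∀ x, 3 * ε ≤ Metric.infDist x Ωᶜ → θ x = 1) ∧
      (∀ x, ‖fderiv ℝ θ x‖ ≤ C / ε) ∧
      (∀ x, (Metric.infDist x Ωᶜ ≤ ε / 2 ∨ 3 * ε ≤ Metric.infDist x Ωᶜ) →
        fderiv ℝ θ x = 0) := by
  obtain ⟨C₀, hC₀pos, hC₀⟩ := smoothTransition_deriv_bound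
  set η := Real.smoothTransition
  refine ⟨max C₀ 1, lt_max_of_lt_right one_pos, fun ε hε => ?_⟩
  set d : (Fin n → ℝ) → ℝ := fun x => Metric.infDist x Ωᶜ with hd_def
  have hd_lip : LipschitzWith 1 d := Metric.lipschitz_infDist_pt _
  have hd_cont : Continuous d := hd_lip.continuous
  set δ : ℝ := ε / 4 with hδ_def
  have hδpos : 0 < δ := by positivity
  set φ : ContDiffBump (0 : Fin n → ℝ) := ⟨δ / 2, δ, half_pos hδpos, half_lt_self hδpos⟩
  set ρ : (Fin n → ℝ) → ℝ := φ.normed volume with hρ_def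
  have hρ_cont : Continuous ρ := φ.continuous_normed
  have hρ_nonneg : ∀ t, 0 ≤ ρ t := φ.nonneg_normed
  have hρ_int : ∫ t, ρ t = 1 := φ.integral_normed
  have hρ_supp : ∀ t, δ ≤ ‖t‖ → ρ t = 0 := by
    intro t ht
    by_contra h
    have : t ∈ Function.support ρ := h
    rw [hρ_def, φ.support_normed_eq] at this
    simp only [Metric.mem_ball, dist_zero_right] at this
    exact absurd this (not_lt.2 ht)
  -- the mollified distance function
  set dδ : (Fin n → ℝ) → ℝ :=
    ρ ⋆[ContinuousLinearMap.lsmul ℝ ℝ, volume] d with hdδ_def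
  have hint : ∀ x : Fin n → ℝ, Integrable (fun t => ρ t • d (x - t)) := by
    intro x
    apply Continuous.integrable_of_hasCompactSupport
    · exact hρ_cont.smul (hd_cont.comp (continuous_const.sub continuous_id))
    · apply HasCompactSupport.smul_right φ.hasCompactSupport_normed
  have hdδ_eq : ∀ x, dδ x = ∫ t, ρ t • d (x - t) := fun x => rfl
  have hdδ_smooth : ContDiff ℝ 1 dδ :=
    HasCompactSupport.contDiff_convolution_left _ φ.hasCompactSupport_normed
      (φ.contDiff_normed (n := 1)) (hd_cont.locallyIntegrable)
  -- `dδ` is 1-Lipschitz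
  have hdδ_lip : LipschitzWith 1 dδ := by
    refine LipschitzWith.of_dist_le_mul fun x y => ?_
    rw [Real.dist_eq, hdδ_eq, hdδ_eq, ← integral_sub (hint x) (hint y)]
    rw [NNReal.coe_one, one_mul, ← Real.norm_eq_abs]
    calc ‖∫ t, ρ t • d (x - t) - ρ t • d (y - t)‖
        ≤ ∫ t, ‖ρ t • d (x - t) - ρ t • d (y - t)‖ := norm_integral_le_integral_norm _
      _ ≤ ∫ t, ρ t * dist x y := by
          refine integral_mono_of_nonneg (Filter.Eventually.of_forall fun t => norm_nonneg _)
            (φ.integrable_normed.mul_const _) (Filter.Eventually.of_forall fun t => ?_)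
          simp only [smul_eq_mul, ← mul_sub, Real.norm_eq_abs, abs_mul,
            abs_of_nonneg (hρ_nonneg t)]
          refine mul_le_mul_of_nonneg_left ?_ (hρ_nonneg t)
          have := hd_lip.dist_le_mul (x - t) (y - t)
          rwa [Real.dist_eq, NNReal.coe_one, one_mul, dist_sub_right] at this
      _ = dist x y := by rw [integral_mul_const, hρ_int, one_mul]
  -- `dδ` is uniformly close to `d`
  have hdδ_close : ∀ x, |dδ x - d x| ≤ δ := by
    intro x
    have hconst : ∫ t, ρ t • d x = d x := by
      rw [integral_smul_const, hρ_int, one_smul]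
    rw [← hconst, hdδ_eq, ← integral_sub (hint x) (φ.integrable_normed.smul_const _),
      ← Real.norm_eq_abs]
    calc ‖∫ t, ρ t • d (x - t) - ρ t • d x‖
        ≤ ∫ t, ‖ρ t • d (x - t) - ρ t • d x‖ := norm_integral_le_integral_norm _
      _ ≤ ∫ t, ρ t * δ := by
          refine integral_mono_of_nonneg (Filter.Eventually.of_forall fun t => norm_nonneg _)
            (φ.integrable_normed.mul_const _) (Filter.Eventually.of_forall fun t => ?_)
          simp only [smul_eq_mul, ← mul_sub, Real.norm_eq_abs, abs_mul,
            abs_of_nonneg (hρ_nonneg t)]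
          rcases le_or_gt δ ‖t‖ with ht | ht
          · rw [hρ_supp t ht, zero_mul, zero_mul]
          · refine mul_le_mul_of_nonneg_left ?_ (hρ_nonneg t)
            have := hd_lip.dist_le_mul (x - t) x
            rw [Real.dist_eq, NNReal.coe_one, one_mul] at this
            refine this.trans ?_
            rw [dist_eq_norm, sub_sub_cancel_left, norm_neg]
            exact ht.le
      _ = δ := by rw [integral_mul_const, hρ_int, one_mul]
  -- the cutoff function
  set u : (Fin n → ℝ) → ℝ := fun x => (dδ x - ε) / ε with hu_def
  have hu_smooth : ContDiff ℝ 1 u := (hdδ_smooth.sub contDiff_const).div_const _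
  set θ : (Fin n → ℝ) → ℝ := fun x => η (u x) with hθ_def
  have hθ_smooth : ContDiff ℝ 1 θ :=
    (Real.smoothTransition.contDiff (n := 1)).comp hu_smooth
  have key_low : ∀ x, d x ≤ ε / 2 → dδ x < ε := fun x hx => by
    have h1 : dδ x ≤ d x + δ := by have := hdδ_close x; rw [abs_le] at this; linarith [this.2]
    rw [hδ_def] at h1; linarith
  have key_high : ∀ x, 3 * ε ≤ d x → 2 * ε < dδ x := fun x hx => by
    have h1 : d x - δ ≤ dδ x := by have := hdδ_close x; rw [abs_le] at this; linarith [this.1]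
    rw [hδ_def] at h1; linarith
  have hθ0 : ∀ x, dδ x < ε → θ x = 0 := fun x hx =>
    Real.smoothTransition.zero_of_nonpos
      (div_nonpos_iff.2 (Or.inr ⟨by linarith, hε.le⟩))
  have hθ1 : ∀ x, 2 * ε < dδ x → θ x = 1 := fun x hx =>
    Real.smoothTransition.one_of_one_le ((one_le_div hε).2 (by linarith))
  refine ⟨θ, hθ_smooth, fun x => ⟨Real.smoothTransition.nonneg _, Real.smoothTransition.le_one _⟩,
    fun x hx => hθ0 x (key_low x hx), fun x hx => hθ1 x (key_high x hx), ?_, ?_⟩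
  · -- gradient bound
    intro x
    have hu_diff : DifferentiableAt ℝ u x := (hu_smooth.differentiable one_ne_zero) x
    have hη_diff : DifferentiableAt ℝ η (u x) :=
      (Real.smoothTransition.contDiff (n := 1)).differentiable one_ne_zero _
    have hcomp : fderiv ℝ θ x = (fderiv ℝ η (u x)).comp (fderiv ℝ u x) :=
      fderiv_comp x hη_diff hu_diff
    rw [hcomp]
    refine (ContinuousLinearMap.opNorm_comp_le _ _).trans ?_
    have h1 : ‖fderiv ℝ η (u x)‖ ≤ C₀ := by
      refine ContinuousLinearMap.opNorm_le_bound _ hC₀pos.le fun v => ?_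
      have hv : fderiv ℝ η (u x) v = v • deriv η (u x) := by
        calc fderiv ℝ η (u x) v = fderiv ℝ η (u x) (v • (1:ℝ)) := by
              rw [smul_eq_mul, mul_one]
          _ = v • fderiv ℝ η (u x) 1 := (fderiv ℝ η (u x)).map_smul v (1:ℝ)
          _ = v • deriv η (u x) := by rw [fderiv_apply_one_eq_deriv]
      rw [hv, norm_smul, Real.norm_eq_abs (deriv η (u x)), mul_comm]
      exact mul_le_mul_of_nonneg_right (hC₀ _) (norm_nonneg v)
    have h2 : ‖fderiv ℝ u x‖ ≤ ε⁻¹ := by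
      have hlipu : LipschitzWith (⟨ε⁻¹, by positivity⟩ : NNReal) u := by
        refine LipschitzWith.of_dist_le_mul fun z w => ?_
        have h := hdδ_lip.dist_le_mul z w
        rw [Real.dist_eq, NNReal.coe_one, one_mul] at h
        rw [Real.dist_eq, hu_def]; change _ ≤ ε⁻¹ * dist z w
        have heq : (dδ z - ε) / ε - (dδ w - ε) / ε = (dδ z - dδ w) / ε := by ring
        rw [heq, abs_div, abs_of_pos hε, div_le_iff₀ hε]
        calc |dδ z - dδ w| ≤ dist z w := h
          _ = ε⁻¹ * dist z w * ε := by field_simp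
      exact norm_fderiv_le_of_lipschitz ℝ hlipu
    calc ‖fderiv ℝ η (u x)‖ * ‖fderiv ℝ u x‖ ≤ C₀ * ε⁻¹ :=
          mul_le_mul h1 h2 (norm_nonneg _) hC₀pos.le
      _ ≤ max C₀ 1 / ε := by
          rw [div_eq_mul_inv]
          exact mul_le_mul_of_nonneg_right (le_max_left _ _) (by positivity)
  · -- gradient vanishes away from the transition region
    rintro x (hx | hx)
    · have hopen : IsOpen {y | dδ y < ε} := isOpen_lt (hdδ_smooth.continuous) continuous_const
      have hmem : x ∈ {y | dδ y < ε} := key_low x hx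
      have : θ =ᶠ[𝓝 x] fun _ => (0:ℝ) := by
        filter_upwards [hopen.mem_nhds hmem] with y hy
        exact hθ0 y hy
      rw [this.fderiv_eq, fderiv_fun_const]; rfl
    · have hopen : IsOpen {y | 2 * ε < dδ y} := isOpen_lt continuous_const hdδ_smooth.continuous
      have hmem : x ∈ {y | 2 * ε < dδ y} := key_high x hx
      have : θ =ᶠ[𝓝 x] fun _ => (1:ℝ) := by
        filter_upwards [hopen.mem_nhds hmem] with y hy
        exact hθ1 y hy
      rw [this.fderiv_eq, fderiv_fun_const]; rfl

end cutoff

section divergence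

variable {n : ℕ}

lemma contIntegrableOn {Ω : Set (Fin n → ℝ)} (hΩb : Bornology.IsBounded Ω)
    {f : (Fin n → ℝ) → ℝ} (hf : Continuous f) : IntegrableOn f Ω :=
  (hf.continuousOn.integrableOn_compact hΩb.isCompact_closure).mono_set subset_closure

/-- The integral over a bounded open set of the divergence of a `C¹` vector field
vanishing on the boundary is zero. -/
theorem integral_divergence_eq_zero (hn : 0 < n) (Ω : Set (Fin n → ℝ))
    (hΩo : IsOpen Ω) (hΩb : Bornology.IsBounded Ω)
    (F : Fin n → (Fin n → ℝ) → ℝ) (hF : ∀ i, ContDiff ℝ 1 (F i))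
    (hFb : ∀ i, ∀ x ∈ frontier Ω, F i x = 0) :
    ∫ x in Ω, ∑ i, fderiv ℝ (F i) x (Pi.single i 1) = 0 := by
  obtain ⟨m, rfl⟩ := Nat.exists_eq_succ_of_ne_zero hn.ne'
  obtain ⟨R, hR0, hRsub⟩ := hΩb.subset_ball_lt 0 0
  -- `Ω` is not everything
  have hΩne_univ : Ω ≠ univ := by
    intro h
    have hmem : (fun _ => R : Fin (m+1) → ℝ) ∈ Metric.ball (0 : Fin (m+1) → ℝ) R :=
      hRsub (h ▸ mem_univ _)
    rw [Metric.mem_ball, dist_zero_right, pi_norm_const, Real.norm_eq_abs,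
      abs_of_pos hR0] at hmem
    exact lt_irrefl _ hmem
  have hΩcne : Ωᶜ.Nonempty := Set.nonempty_compl.2 hΩne_univ
  have hdpos : ∀ x ∈ Ω, 0 < Metric.infDist x Ωᶜ := fun x hx => by
    rw [← (hΩo.isClosed_compl.notMem_iff_infDist_pos hΩcne)]
    simp [hx]
  -- a Lipschitz-type bound for `F` in terms of the distance to the boundary
  have hDcont : ∀ i, Continuous fun x => fderiv ℝ (F i) x := fun i =>
    (hF i).continuous_fderiv one_ne_zero
  obtain ⟨M₀, hM₀⟩ := (isCompact_closedBall (0 : Fin (m+1) → ℝ) (R+1)).exists_bound_of_continuousOn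
    (Continuous.continuousOn (continuous_finset_sum Finset.univ fun i _ => (hDcont i).norm))
  set M : ℝ := max M₀ 0 with hM_def
  have hM0 : 0 ≤ M := le_max_right _ _
  have hMb : ∀ i, ∀ z ∈ Metric.closedBall (0 : Fin (m+1) → ℝ) (R+1),
      ‖fderiv ℝ (F i) z‖ ≤ M := by
    intro i z hz
    calc ‖fderiv ℝ (F i) z‖ ≤ ∑ j, ‖fderiv ℝ (F j) z‖ :=
          Finset.single_le_sum (f := fun j => ‖fderiv ℝ (F j) z‖)
            (fun j _ => norm_nonneg _) (Finset.mem_univ i)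
      _ ≤ M := by
          have := hM₀ z hz
          rw [Real.norm_eq_abs, abs_of_nonneg (Finset.sum_nonneg fun j _ => norm_nonneg _)] at this
          exact this.trans (le_max_left _ _)
  have hclsub : closure Ω ⊆ Metric.closedBall (0 : Fin (m+1) → ℝ) (R+1) :=
    (closure_mono hRsub).trans ((closure_ball_subset_closedBall).trans
      (Metric.closedBall_subset_closedBall (by linarith)))
  have hFM : ∀ i, ∀ x ∈ Ω, |F i x| ≤ M * Metric.infDist x Ωᶜ := by
    intro i x hx
    obtain ⟨y, hyf, hyd⟩ := exists_mem_frontier_infDist_compl_eq_dist hx hΩne_univ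
    have hxb : x ∈ Metric.closedBall (0 : Fin (m+1) → ℝ) (R+1) := hclsub (subset_closure hx)
    have hyb : y ∈ Metric.closedBall (0 : Fin (m+1) → ℝ) (R+1) :=
      hclsub (frontier_subset_closure hyf)
    have hkey := Convex.norm_image_sub_le_of_norm_fderiv_le
      (f := F i) (fun z _ => ((hF i).differentiable one_ne_zero).differentiableAt)
      (fun z hz => hMb i z hz) (convex_closedBall _ _) hyb hxb
    rw [hFb i y hyf, sub_zero, Real.norm_eq_abs] at hkey
    rw [hyd]
    calc |F i x| ≤ M * ‖x - y‖ := hkey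
      _ = M * dist x y := by rw [dist_eq_norm]
  -- cutoff sequence
  obtain ⟨C, hCpos, hcut⟩ := exists_cutoff Ω
  set ε : ℕ → ℝ := fun k => 1 / (k + 1) with hε_def
  have hεpos : ∀ k, 0 < ε k := fun k => by positivity
  choose θ hθsm hθ01 hθ0 hθ1 hθgrad hθgrad0 using fun k => hcut (ε k) (hεpos k)
  have hθΩ : ∀ k, ∀ y, y ∉ Ω → θ k y = 0 ∧ fderiv ℝ (θ k) y = 0 := by
    intro k y hy
    have h0 : Metric.infDist y Ωᶜ = 0 := Metric.infDist_zero_of_mem hy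
    exact ⟨hθ0 k y (by rw [h0]; positivity), hθgrad0 k y (Or.inl (by rw [h0]; positivity))⟩
  -- the box
  set A : Fin (m+1) → ℝ := fun _ => -(R+1) with hA_def
  set B : Fin (m+1) → ℝ := fun _ => R+1 with hB_def
  have hAB : A ≤ B := fun i => by simp only [hA_def, hB_def]; linarith
  have hΩIcc : Ω ⊆ Set.Icc A B := by
    intro y hy
    have hy' := hRsub hy
    rw [Metric.mem_ball, dist_zero_right] at hy'
    refine ⟨fun i => ?_, fun i => ?_⟩ <;>
    · have := (abs_le.1 ((norm_le_pi_norm y i).trans hy'.le)).1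
      have := (abs_le.1 ((norm_le_pi_norm y i).trans hy'.le)).2
      simp only [hA_def, hB_def]
      linarith
  -- continuity facts
  have hdivcont : Continuous fun x => ∑ i, fderiv ℝ (F i) x (Pi.single i 1) :=
    continuous_finset_sum _ fun i _ => (hDcont i).clm_apply continuous_const
  have hθgradcont : ∀ k, Continuous fun x => fderiv ℝ (θ k) x := fun k =>
    (hθsm k).continuous_fderiv one_ne_zero
  -- the integration-by-parts identity for each cutoff
  have key : ∀ k, (∫ x in Ω, θ k x * ∑ i, fderiv ℝ (F i) x (Pi.single i 1))
      = - ∫ x in Ω, ∑ i, F i x * fderiv ℝ (θ k) x (Pi.single i 1) := by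
    intro k
    set G' : (Fin (m+1) → ℝ) → Fin (m+1) → (Fin (m+1) → ℝ) →L[ℝ] ℝ :=
      fun x i => θ k x • fderiv ℝ (F i) x + F i x • fderiv ℝ (θ k) x with hG'_def
    have hGcont : ∀ i, Continuous fun x => θ k x * F i x := fun i =>
      (hθsm k).continuous.mul (hF i).continuous
    have hG'cont : Continuous fun x => ∑ i, G' x i (Pi.single i 1) := by
      refine continuous_finset_sum _ fun i _ => ?_
      simp only [hG'_def, ContinuousLinearMap.add_apply, ContinuousLinearMap.coe_smul',
        Pi.smul_apply, smul_eq_mul]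
      exact ((hθsm k).continuous.mul ((hDcont i).clm_apply continuous_const)).add
        ((hF i).continuous.mul ((hθgradcont k).clm_apply continuous_const))
    have hdiv := integral_divergence_of_hasFDerivAt_off_countable' A B hAB
      (fun i x => θ k x * F i x) (fun i x => G' x i) ∅ countable_empty
      (fun i => (hGcont i).continuousOn)
      (fun x _ i => (((hθsm k).differentiable one_ne_zero x).hasFDerivAt.mul
        (((hF i).differentiable one_ne_zero) x).hasFDerivAt))
      (hG'cont.integrableOn_Icc)
    -- all boundary faces vanish
    have hbig : ∀ (i : Fin (m+1)) (c : ℝ) (z : Fin m → ℝ), R + 1 ≤ |c| →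
        θ k (i.insertNth (α := fun _ => ℝ) c z) = 0 := by
      intro i c z hc
      refine (hθΩ k _ fun hmem => ?_).1
      have := hRsub hmem
      rw [Metric.mem_ball, dist_zero_right] at this
      have h1 : |c| ≤ ‖i.insertNth (α := fun _ => ℝ) c z‖ := by
        have := norm_le_pi_norm (i.insertNth (α := fun _ => ℝ) c z) i
        rwa [Fin.insertNth_apply_same, Real.norm_eq_abs] at this
      linarith
    have hzero : ∀ x, x ∉ Ω → (∑ i, G' x i (Pi.single i 1)) = 0 := by
      intro x hx
      refine Finset.sum_eq_zero fun i _ => ?_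
      simp only [hG'_def, ContinuousLinearMap.add_apply, ContinuousLinearMap.coe_smul',
        Pi.smul_apply, smul_eq_mul, (hθΩ k x hx).1, (hθΩ k x hx).2, zero_mul,
        ContinuousLinearMap.zero_apply, mul_zero, add_zero]
    have hL1 : (∫ x in Set.Icc A B, ∑ i, G' x i (Pi.single i 1))
        = ∫ x, ∑ i, G' x i (Pi.single i 1) :=
      setIntegral_eq_integral_of_forall_compl_eq_zero fun x hx =>
        hzero x (fun h => hx (hΩIcc h))
    have hL2 : (∫ x in Ω, ∑ i, G' x i (Pi.single i 1))
        = ∫ x, ∑ i, G' x i (Pi.single i 1) :=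
      setIntegral_eq_integral_of_forall_compl_eq_zero fun x hx => hzero x hx
    have hfin : (∫ x in Ω, ∑ i, G' x i (Pi.single i 1)) = 0 := by
      rw [hL2, ← hL1, hdiv]
      refine Finset.sum_eq_zero fun i _ => ?_
      have h1 : ∀ z : Fin m → ℝ, θ k (i.insertNth (α := fun _ => ℝ) (B i) z)
          * F i (i.insertNth (α := fun _ => ℝ) (B i) z) = 0 := by
        intro z
        rw [hbig i (B i) z (by simp only [hB_def]; rw [abs_of_pos] <;> linarith), zero_mul]
      have h2 : ∀ z : Fin m → ℝ, θ k (i.insertNth (α := fun _ => ℝ) (A i) z)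
          * F i (i.insertNth (α := fun _ => ℝ) (A i) z) = 0 := by
        intro z
        rw [hbig i (A i) z (by simp only [hA_def]; rw [abs_of_neg] <;> linarith), zero_mul]
      simp only [h1, h2, integral_zero, sub_zero, sub_self]
    -- now expand the divergence and split the integral
    have hexp : ∀ x, (∑ i, G' x i (Pi.single i 1)) =
        θ k x * (∑ i, fderiv ℝ (F i) x (Pi.single i 1))
          + ∑ i, F i x * fderiv ℝ (θ k) x (Pi.single i 1) := by
      intro x
      rw [Finset.mul_sum, ← Finset.sum_add_distrib]
      refine Finset.sum_congr rfl fun i _ => ?_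
      simp only [hG'_def, ContinuousLinearMap.add_apply, ContinuousLinearMap.coe_smul',
        Pi.smul_apply, smul_eq_mul]
    rw [show (fun x => ∑ i, G' x i (Pi.single i 1)) = fun x =>
        θ k x * (∑ i, fderiv ℝ (F i) x (Pi.single i 1))
          + ∑ i, F i x * fderiv ℝ (θ k) x (Pi.single i 1) from funext hexp,
      integral_add (contIntegrableOn hΩb ((hθsm k).continuous.fun_mul hdivcont))
        (contIntegrableOn hΩb (continuous_finset_sum _ fun i _ =>
          (hF i).continuous.fun_mul ((hθgradcont k).clm_apply continuous_const)))] at hfin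
    linarith
  -- pass to the limit along `ε k = 1/(k+1)`
  have hεto : Filter.Tendsto ε atTop (𝓝 0) := tendsto_one_div_add_atTop_nhds_zero_nat
  have hT1 : Filter.Tendsto
      (fun k => ∫ x in Ω, θ k x * ∑ i, fderiv ℝ (F i) x (Pi.single i 1)) atTop
      (𝓝 (∫ x in Ω, ∑ i, fderiv ℝ (F i) x (Pi.single i 1))) := by
    refine tendsto_integral_of_dominated_convergence
      (fun x => |∑ i, fderiv ℝ (F i) x (Pi.single i 1)|)
      (fun k => ((hθsm k).continuous.mul hdivcont).aestronglyMeasurable)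
      ((contIntegrableOn hΩb hdivcont).abs) (fun k => ?_) ?_
    · refine Filter.Eventually.of_forall fun x => ?_
      rw [Real.norm_eq_abs, abs_mul]
      calc |θ k x| * |∑ i, fderiv ℝ (F i) x (Pi.single i 1)|
          ≤ 1 * |∑ i, fderiv ℝ (F i) x (Pi.single i 1)| := by
            refine mul_le_mul_of_nonneg_right ?_ (abs_nonneg _)
            rw [abs_of_nonneg (hθ01 k x).1]; exact (hθ01 k x).2
        _ = _ := one_mul _
    · filter_upwards [ae_restrict_mem hΩo.measurableSet] with x hx
      have hd := hdpos x hx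
      have hev : ∀ᶠ k in atTop, ε k < Metric.infDist x Ωᶜ / 3 :=
        hεto.eventually_lt_const (by linarith)
      refine Filter.Tendsto.congr' ?_ tendsto_const_nhds
      filter_upwards [hev] with k hk
      rw [hθ1 k x (by linarith), one_mul]
  have hT2 : Filter.Tendsto
      (fun k => ∫ x in Ω, ∑ i, F i x * fderiv ℝ (θ k) x (Pi.single i 1)) atTop (𝓝 0) := by
    have h := tendsto_integral_of_dominated_convergence
      (F := fun k x => ∑ i, F i x * fderiv ℝ (θ k) x (Pi.single i 1))
      (f := fun _ => (0:ℝ)) (μ := volume.restrict Ω)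
      (fun _ => ((m:ℝ)+1) * (3 * M * C))
      (fun k => (continuous_finset_sum _ fun i _ =>
        (hF i).continuous.mul ((hθgradcont k).clm_apply continuous_const)).aestronglyMeasurable)
      ((integrableOn_const hΩb.measure_lt_top.ne))
      (fun k => ?_) ?_
    · simpa using h
    · -- uniform bound
      filter_upwards [ae_restrict_mem hΩo.measurableSet] with x hx
      calc ‖∑ i, F i x * fderiv ℝ (θ k) x (Pi.single i 1)‖
          ≤ ∑ i, ‖F i x * fderiv ℝ (θ k) x (Pi.single i 1)‖ := norm_sum_le _ _
        _ ≤ ∑ _i : Fin (m+1), 3 * M * C := by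
            refine Finset.sum_le_sum fun i _ => ?_
            rcases eq_or_ne (fderiv ℝ (θ k) x) 0 with h0 | h0
            · rw [h0]
              simp only [ContinuousLinearMap.zero_apply, mul_zero, norm_zero]
              positivity
            · have h36 : ε k / 2 < Metric.infDist x Ωᶜ ∧
                  Metric.infDist x Ωᶜ < 3 * ε k := by
                by_contra hcon
                push_neg at hcon
                rcases le_or_gt (Metric.infDist x Ωᶜ) (ε k / 2) with h | h
                · exact h0 (hθgrad0 k x (Or.inl h))
                · exact h0 (hθgrad0 k x (Or.inr (hcon h)))
              rw [Real.norm_eq_abs, abs_mul]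
              have hb1 : |F i x| ≤ M * (3 * ε k) :=
                (hFM i x hx).trans (mul_le_mul_of_nonneg_left h36.2.le hM0)
              have hb2 : |fderiv ℝ (θ k) x (Pi.single i 1)| ≤ C / ε k := by
                rw [← Real.norm_eq_abs]
                refine ((fderiv ℝ (θ k) x).le_opNorm _).trans ?_
                rw [Pi.norm_single, norm_one, mul_one]
                exact hθgrad k x
              calc |F i x| * |fderiv ℝ (θ k) x (Pi.single i 1)|
                  ≤ (M * (3 * ε k)) * (C / ε k) := by
                    refine mul_le_mul hb1 hb2 (abs_nonneg _) (by positivity)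
                _ = 3 * M * C := by
                    rw [show M * (3 * ε k) * (C / ε k) = 3 * M * C * (ε k / ε k) by ring,
                      div_self (hεpos k).ne', mul_one]
        _ = ((m:ℝ)+1) * (3 * M * C) := by
            rw [Finset.sum_const, Finset.card_univ, Fintype.card_fin, nsmul_eq_mul]
            push_cast
            ring
    · -- pointwise convergence to zero
      filter_upwards [ae_restrict_mem hΩo.measurableSet] with x hx
      have hd := hdpos x hx
      have hev : ∀ᶠ k in atTop, ε k < Metric.infDist x Ωᶜ / 3 :=
        hεto.eventually_lt_const (by linarith)
      refine Filter.Tendsto.congr' ?_ tendsto_const_nhds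
      filter_upwards [hev] with k hk
      rw [Finset.sum_eq_zero]
      intro i _
      rw [hθgrad0 k x (Or.inr (by linarith))]
      simp
  have hT1' : Filter.Tendsto
      (fun k => - ∫ x in Ω, ∑ i, F i x * fderiv ℝ (θ k) x (Pi.single i 1)) atTop
      (𝓝 (∫ x in Ω, ∑ i, fderiv ℝ (F i) x (Pi.single i 1))) :=
    hT1.congr (fun k => key k)
  have h2 := hT2.neg
  rw [neg_zero] at h2
  exact tendsto_nhds_unique hT1' h2

end divergence

section main

variable {n : ℕ}

lemma contDiff_pd {m : ℕ∞} {h : (Fin n → ℝ) → ℝ} (hh : ContDiff ℝ (m+1) h) (i : Fin n) :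
    ContDiff ℝ m (fun x => fderiv ℝ h x (Pi.single i 1)) :=
  (hh.fderiv_right le_rfl).clm_apply contDiff_const

lemma contDiff_laplacian {m : ℕ∞} {f : (Fin n → ℝ) → ℝ} (hf : ContDiff ℝ (m+2) f) :
    ContDiff ℝ m (laplacian f) := by
  have hf' : ContDiff ℝ ((m+1)+1) f := by
    rwa [add_assoc, one_add_one_eq_two]
  exact ContDiff.sum fun i _ => contDiff_pd (contDiff_pd hf' i) i

lemma memL2_of_continuous {Ω : Set (Fin n → ℝ)} (hΩo : IsOpen Ω)
    (hΩb : Bornology.IsBounded Ω) {h : (Fin n → ℝ) → ℝ} (hh : Continuous h) :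
    MemLp h (ENNReal.ofReal 2) (volume.restrict Ω) := by
  obtain ⟨Cb, hCb⟩ := hΩb.isCompact_closure.exists_bound_of_continuousOn hh.continuousOn
  have : Fact (volume Ω < ⊤) := ⟨hΩb.measure_lt_top⟩
  refine MemLp.of_bound hh.aestronglyMeasurable.restrict Cb ?_
  filter_upwards [ae_restrict_mem hΩo.measurableSet] with x hx
  exact hCb x (subset_closure hx)

end main

/-- Estimate (3.6) of Lemma 3.1: control of the Zakharov–Kuznetsov term `Δf_{x₁}`
by the bi-Laplacian, for `f ∈ H⁴(Ω) ∩ H¹₀(Ω)` (here a `C⁴` function vanishing on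
`∂Ω`) with `Δf = 0` on `∂Ω`, assuming the Poincaré inequality
`a‖g‖² ≤ ‖∇g‖²` holds for all `g ∈ H¹₀(Ω)`. -/
theorem zk_term_bound (n : ℕ) (hn : 0 < n) (Ω : Set (Fin n → ℝ))
    (hΩopen : IsOpen Ω) (hΩbdd : Bornology.IsBounded Ω)
    (f : (Fin n → ℝ) → ℝ) (hf : ContDiff ℝ 4 f)
    (hbd : ∀ x ∈ frontier Ω, f x = 0)
    (hΔbd : ∀ x ∈ frontier Ω, laplacian f x = 0)
    (a : ℝ) (ha : 0 < a)
    (hpoincare : ∀ g : (Fin n → ℝ) → ℝ, ContDiff ℝ 1 g →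
      (∀ x ∈ frontier Ω, g x = 0) →
      a * ∫ x in Ω, (g x) ^ 2 ≤ ∫ x in Ω, ∑ i, (fderiv ℝ g x (Pi.single i 1)) ^ 2) :
    (∫ x in Ω, (fderiv ℝ (laplacian f) x (Pi.single (⟨0, hn⟩ : Fin n) 1)) ^ 2 ≤
        ∫ x in Ω, ∑ i, (fderiv ℝ (laplacian f) x (Pi.single i 1)) ^ 2) ∧
    (∫ x in Ω, ∑ i, (fderiv ℝ (laplacian f) x (Pi.single i 1)) ^ 2 ≤
        Real.sqrt (∫ x in Ω, (laplacian (laplacian f) x) ^ 2) *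
          Real.sqrt (∫ x in Ω, (laplacian f x) ^ 2)) ∧
    a * ∫ x in Ω, (fderiv ℝ (laplacian f) x (Pi.single (⟨0, hn⟩ : Fin n) 1)) ^ 2 ≤
        ∫ x in Ω, (laplacian (laplacian f) x) ^ 2 := by
  set g : (Fin n → ℝ) → ℝ := laplacian f with hg_def
  have hg2 : ContDiff ℝ 2 g := contDiff_laplacian (m := 2) (hf.of_le (by norm_num))
  have hg1 : ContDiff ℝ 1 g := hg2.of_le (by norm_num)
  have hpd_cont : ∀ i : Fin n, Continuous fun x => fderiv ℝ g x (Pi.single i 1) := by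
    intro i
    exact (contDiff_pd (m := 0) (hg1.of_le (by norm_num)) i).continuous
  have hΔg_cont : Continuous (laplacian g) := by
    exact (contDiff_laplacian (m := 0) (hg2.of_le (by norm_num))).continuous
  have hg_cont : Continuous g := hg1.continuous
  -- basic integrabilities
  have hIsq : ∀ i : Fin n, IntegrableOn (fun x => (fderiv ℝ g x (Pi.single i 1)) ^ 2) Ω :=
    fun i => contIntegrableOn hΩbdd ((hpd_cont i).pow 2)
  have hIsum : IntegrableOn (fun x => ∑ i, (fderiv ℝ g x (Pi.single i 1)) ^ 2) Ω :=
    contIntegrableOn hΩbdd (continuous_finset_sum _ fun i _ => (hpd_cont i).pow 2)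
  -- Part 1
  have part1 : ∫ x in Ω, (fderiv ℝ g x (Pi.single (⟨0, hn⟩ : Fin n) 1)) ^ 2 ≤
      ∫ x in Ω, ∑ i, (fderiv ℝ g x (Pi.single i 1)) ^ 2 := by
    refine setIntegral_mono_on (hIsq _) hIsum hΩopen.measurableSet fun x _ => ?_
    exact Finset.single_le_sum (f := fun i => (fderiv ℝ g x (Pi.single i 1)) ^ 2)
      (fun i _ => sq_nonneg _) (Finset.mem_univ _)
  -- integration by parts
  have hpdC1 : ∀ i : Fin n, ContDiff ℝ 1 fun x => fderiv ℝ g x (Pi.single i 1) := by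
    intro i
    exact contDiff_pd (m := 1) (hg2.of_le (by norm_num)) i
  have hibp : (∫ x in Ω, ∑ i, (fderiv ℝ g x (Pi.single i 1)) ^ 2)
      = - ∫ x in Ω, g x * laplacian g x := by
    have hdiv := integral_divergence_eq_zero hn Ω hΩopen hΩbdd
      (fun i x => g x * fderiv ℝ g x (Pi.single i 1))
      (fun i => hg1.mul (hpdC1 i))
      (fun i x hx => by
        show g x * fderiv ℝ g x (Pi.single i 1) = 0
        rw [show g x = 0 from hΔbd x hx, zero_mul])
    have hexp : ∀ x : Fin n → ℝ,
        (∑ i, fderiv ℝ (fun y => g y * fderiv ℝ g y (Pi.single i 1)) x (Pi.single i 1))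
        = (∑ i, (fderiv ℝ g x (Pi.single i 1)) ^ 2) + g x * laplacian g x := by
      intro x
      rw [laplacian, Finset.mul_sum, ← Finset.sum_add_distrib]
      refine Finset.sum_congr rfl fun i _ => ?_
      have hdg : DifferentiableAt ℝ g x := (hg1.differentiable one_ne_zero) x
      have hdpd : DifferentiableAt ℝ (fun y => fderiv ℝ g y (Pi.single i 1)) x :=
        ((hpdC1 i).differentiable one_ne_zero) x
      rw [fderiv_fun_mul hdg hdpd]
      simp only [ContinuousLinearMap.add_apply, ContinuousLinearMap.coe_smul',
        Pi.smul_apply, smul_eq_mul]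
      ring
    rw [show (fun x => ∑ i, fderiv ℝ
          (fun y => g y * fderiv ℝ g y (Pi.single i 1)) x (Pi.single i 1))
        = fun x => (∑ i, (fderiv ℝ g x (Pi.single i 1)) ^ 2) + g x * laplacian g x
        from funext hexp,
      integral_add hIsum (contIntegrableOn hΩbdd (hg_cont.fun_mul hΔg_cont))] at hdiv
    linarith
  -- Cauchy-Schwarz
  have hCS : (∫ x in Ω, |laplacian g x| * |g x|) ≤
      Real.sqrt (∫ x in Ω, (laplacian g x) ^ 2) * Real.sqrt (∫ x in Ω, (g x) ^ 2) := by
    have hpq : Real.HolderConjugate 2 2 := ⟨by norm_num, by norm_num, by norm_num⟩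
    have h := integral_mul_le_Lp_mul_Lq_of_nonneg hpq
      (f := fun x => |laplacian g x|) (g := fun x => |g x|)
      (Filter.Eventually.of_forall fun x => abs_nonneg _)
      (Filter.Eventually.of_forall fun x => abs_nonneg _)
      (memL2_of_continuous hΩopen hΩbdd hΔg_cont.abs)
      (memL2_of_continuous hΩopen hΩbdd hg_cont.abs)
    have habs2 : ∀ y : ℝ, |y| ^ (2:ℝ) = y ^ 2 := fun y => by
      rw [show |y| ^ (2:ℝ) = |y| ^ (2:ℕ) from Real.rpow_natCast _ 2, sq_abs]
    simp only [habs2] at h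
    have hs1 : (∫ x in Ω, (laplacian g x) ^ 2) ^ ((1:ℝ)/2)
        = Real.sqrt (∫ x in Ω, (laplacian g x) ^ 2) := by
      rw [Real.sqrt_eq_rpow]
    have hs2 : (∫ x in Ω, (g x) ^ 2) ^ ((1:ℝ)/2)
        = Real.sqrt (∫ x in Ω, (g x) ^ 2) := by
      rw [Real.sqrt_eq_rpow]
    rw [hs1, hs2] at h
    exact h
  -- Part 2
  have part2 : (∫ x in Ω, ∑ i, (fderiv ℝ g x (Pi.single i 1)) ^ 2) ≤
      Real.sqrt (∫ x in Ω, (laplacian g x) ^ 2) * Real.sqrt (∫ x in Ω, (g x) ^ 2) := by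
    rw [hibp]
    have h1 : - (∫ x in Ω, g x * laplacian g x) ≤ ∫ x in Ω, |laplacian g x| * |g x| := by
      have : ∀ x : Fin n → ℝ, - (g x * laplacian g x) ≤ |laplacian g x| * |g x| := by
        intro x
        calc - (g x * laplacian g x) ≤ |g x * laplacian g x| := neg_le_abs _
          _ = |laplacian g x| * |g x| := by rw [abs_mul, mul_comm]
      calc - (∫ x in Ω, g x * laplacian g x) = ∫ x in Ω, - (g x * laplacian g x) := by
            rw [integral_neg]
        _ ≤ ∫ x in Ω, |laplacian g x| * |g x| :=
            setIntegral_mono_on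
              ((contIntegrableOn hΩbdd (hg_cont.mul hΔg_cont)).neg)
              (contIntegrableOn hΩbdd (hΔg_cont.abs.mul hg_cont.abs))
              hΩopen.measurableSet (fun x _ => this x)
    exact h1.trans hCS
  refine ⟨part1, part2, ?_⟩
  -- Part 3
  set P := Real.sqrt (∫ x in Ω, (laplacian g x) ^ 2) with hP_def
  set Q := Real.sqrt (∫ x in Ω, (g x) ^ 2) with hQ_def
  have hPnn : 0 ≤ P := Real.sqrt_nonneg _
  have hQnn : 0 ≤ Q := Real.sqrt_nonneg _
  have hQsq : Q ^ 2 = ∫ x in Ω, (g x) ^ 2 :=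
    Real.sq_sqrt (setIntegral_nonneg hΩopen.measurableSet fun x _ => sq_nonneg _)
  have hPsq : P ^ 2 = ∫ x in Ω, (laplacian g x) ^ 2 :=
    Real.sq_sqrt (setIntegral_nonneg hΩopen.measurableSet fun x _ => sq_nonneg _)
  have hpoin := hpoincare g hg1 hΔbd
  have haQP : a * Q ≤ P := by
    rcases eq_or_lt_of_le hQnn with hQ0 | hQ0
    · rw [← hQ0, mul_zero]; exact hPnn
    · have h1 : a * Q ^ 2 ≤ P * Q := by
        rw [hQsq]
        exact hpoin.trans part2
      have h2 : a * Q * Q ≤ P * Q := by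
        calc a * Q * Q = a * Q ^ 2 := by ring
          _ ≤ P * Q := h1
      exact le_of_mul_le_mul_right h2 hQ0
  have part3 : a * ∫ x in Ω, (fderiv ℝ g x (Pi.single (⟨0, hn⟩ : Fin n) 1)) ^ 2
      ≤ ∫ x in Ω, (laplacian g x) ^ 2 := by
    rw [← hPsq]
    calc a * ∫ x in Ω, (fderiv ℝ g x (Pi.single (⟨0, hn⟩ : Fin n) 1)) ^ 2
        ≤ a * ∫ x in Ω, ∑ i, (fderiv ℝ g x (Pi.single i 1)) ^ 2 :=
          mul_le_mul_of_nonneg_left part1 ha.le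
      _ ≤ a * (P * Q) := mul_le_mul_of_nonneg_left part2 ha.le
      _ = P * (a * Q) := by ring
      _ ≤ P * P := mul_le_mul_of_nonneg_left haQP hPnn
      _ = P ^ 2 := by ring
  exact part3
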